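/- arXiv:1412.7083 — 4 statements merged into one kernel-verified Lean document; each statement's English description precedes it below -/
import Mathlib

section
/- Suppose functions $\tilde h_0, \tilde m_0, \tilde{P}_0, \omega$ on an interval satisfy the equations $\tilde{P}_0' = -\frac{4\pi (E+P) r^2}{r - 2M(r)} \tilde{P}_0 - \frac{(r e^{-\lambda}\tilde m_0) r^2}{(r-2M(r))^2}\left(8\pi P + \frac{1}{r^2}\right) + \frac{r^4 j^2}{12(r - 2M(r))} \omega'^2 + \frac{1}{3}\left(\frac{r^3 j^2 (\omega-\Omega)^2}{r-2M(r)}\right)'$ and $\tilde h_0' - r e^{\lambda} \tilde m_0 (8\pi P + 1/r^2) = 4\pi r e^{\lambda}(E+P)\tilde{P}_0 - \frac{1}{12} e^{\lambda} r^3 j^2 \omega'^2$, where $e^{-\lambda} = 1 - 2M(r)/r$ and $j = e^{-(\lambda+\nu)/2}$ with $\nu$ satisfying $\nu' = \frac{1}{r}(e^{\lambda}-1) + 8\pi r e^{\lambda} P$. Then the quantity $\tilde{P}_0 + \tilde h_0 - \frac{1}{3} r^2 e^{-\nu}(\omega - \Omega)^2$ has vanishing derivative, i.e. it is a first integral (equal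 to a constant $\gamma$). -/
open Real Set

theorem first_integral_l0
    (I : Set ℝ) (hI : IsOpen I) (hIsub : I ⊆ Ioi (0:ℝ))
    (E P ν lam Mf j ω h0 m0 P0 : ℝ → ℝ) (Ω : ℝ)
    (hEdiff : ∀ r ∈ I, DifferentiableAt ℝ E r)
    (hPdiff : ∀ r ∈ I, DifferentiableAt ℝ P r)
    (hνdiff : ∀ r ∈ I, DifferentiableAt ℝ ν r)
    (hlamdiff : ∀ r ∈ I, DifferentiableAt ℝ lam r)
    (hMdiff : ∀ r ∈ I, DifferentiableAt ℝ Mf r)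
    (hjdiff : ∀ r ∈ I, DifferentiableAt ℝ j r)
    (hωdiff : ∀ r ∈ I, DifferentiableAt ℝ ω r)
    (hω'diff : ∀ r ∈ I, DifferentiableAt ℝ (deriv ω) r)
    (hh0diff : ∀ r ∈ I, DifferentiableAt ℝ h0 r)
    (hm0diff : ∀ r ∈ I, DifferentiableAt ℝ m0 r)
    (hP0diff : ∀ r ∈ I, DifferentiableAt ℝ P0 r)
    (hmass : ∀ r ∈ I, Real.exp (-(lam r)) = 1 - 2*(Mf r)/r)
    (hhoriz : ∀ r ∈ I, r - 2*(Mf r) ≠ 0)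
    (hj : ∀ r ∈ I, j r = Real.exp (-((lam r) + (ν r))/2))
    (hlam' : ∀ r ∈ I, deriv lam r = (1/r)*(1 - Real.exp (lam r)) + 8*π*r*Real.exp (lam r)*(E r))
    (hν' : ∀ r ∈ I, deriv ν r = (1/r)*(Real.exp (lam r) - 1) + 8*π*r*Real.exp (lam r)*(P r))
    (hP0' : ∀ r ∈ I, deriv P0 r =
      -((4*π*(E r + P r)*r^2)/(r - 2*(Mf r)))*(P0 r)
      - ((r*Real.exp (-(lam r))*(m0 r))*r^2/(r - 2*(Mf r))^2)*(8*π*(P r) + 1/r^2)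
      + (r^4*(j r)^2/(12*(r - 2*(Mf r))))*(deriv ω r)^2
      + (1/3)*deriv (fun s => s^3*(j s)^2*(ω s - Ω)^2/(s - 2*(Mf s))) r)
    (hh0' : ∀ r ∈ I, deriv h0 r - r*Real.exp (lam r)*(m0 r)*(8*π*(P r) + 1/r^2)
      = 4*π*r*Real.exp (lam r)*(E r + P r)*(P0 r)
        - (1/12)*Real.exp (lam r)*r^3*(j r)^2*(deriv ω r)^2) :
    ∀ r ∈ I,
      deriv (fun s => P0 s + h0 s - (1/3)*s^2*Real.exp (-(ν s))*(ω s - Ω)^2) r = 0 := by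

  intro r hr
  have hrpos : (0:ℝ) < r := hIsub hr
  have hrne : r ≠ 0 := ne_of_gt hrpos
  have hIr : I ∈ nhds r := hI.mem_nhds hr
  have hGeq : (fun s => s^3*(j s)^2*(ω s - Ω)^2/(s - 2*(Mf s)))
      =ᶠ[nhds r] (fun s => s^2*Real.exp (-(ν s))*(ω s - Ω)^2) := by
    filter_upwards [hIr] with s hs
    have hsne : s ≠ 0 := ne_of_gt (hIsub hs)
    have h1 : s - 2*(Mf s) = s * Real.exp (-(lam s)) := by
      rw [hmass s hs]; field_simp
    have h2 : (j s)^2 = Real.exp (-(lam s)) * Real.exp (-(ν s)) := by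
      rw [hj s hs, ← Real.exp_add, ← Real.exp_nat_mul]
      ring_nf
    have he : Real.exp (-(lam s)) ≠ 0 := Real.exp_ne_zero _
    rw [h1, h2]
    field_simp
  have hderivG : deriv (fun s => s^3*(j s)^2*(ω s - Ω)^2/(s - 2*(Mf s))) r
      = deriv (fun s => s^2*Real.exp (-(ν s))*(ω s - Ω)^2) r :=
    Filter.EventuallyEq.deriv_eq hGeq
  have hG2 : DifferentiableAt ℝ (fun s => s^2*Real.exp (-(ν s))*(ω s - Ω)^2) r := by
    exact (((differentiableAt_id.pow 2).mul ((hνdiff r hr).neg.exp)).mul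
      (((hωdiff r hr).sub_const Ω).pow 2))
  have hF : deriv (fun s => P0 s + h0 s - (1/3)*s^2*Real.exp (-(ν s))*(ω s - Ω)^2) r
      = deriv P0 r + deriv h0 r
        - (1/3)*deriv (fun s => s^2*Real.exp (-(ν s))*(ω s - Ω)^2) r := by
    have hfe : (fun s => P0 s + h0 s - (1/3)*s^2*Real.exp (-(ν s))*(ω s - Ω)^2)
        = fun s => (P0 s + h0 s) - (1/3)*(s^2*Real.exp (-(ν s))*(ω s - Ω)^2) := by
      funext s; ring
    rw [hfe, deriv_fun_sub (f := fun s => P0 s + h0 s) ((hP0diff r hr).add (hh0diff r hr)) (hG2.const_mul _),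
        deriv_fun_add (hP0diff r hr) (hh0diff r hr), deriv_const_mul _ hG2]
  rw [hF, hP0' r hr, hderivG]
  have hh0'' := hh0' r hr
  have hrm : r - 2*(Mf r) = r * Real.exp (-(lam r)) := by
    rw [hmass r hr]; field_simp
  have hj2 : (j r)^2 = Real.exp (-(lam r)) * Real.exp (-(ν r)) := by
    rw [hj r hr, ← Real.exp_add, ← Real.exp_nat_mul]
    ring_nf
  have hexp : Real.exp (-(lam r)) = (Real.exp (lam r))⁻¹ := Real.exp_neg _
  have hane : Real.exp (lam r) ≠ 0 := Real.exp_ne_zero _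
  have hS : deriv h0 r = r*Real.exp (lam r)*(m0 r)*(8*π*(P r) + 1/r^2)
      + 4*π*r*Real.exp (lam r)*(E r + P r)*(P0 r)
      - (1/12)*Real.exp (lam r)*r^3*(j r)^2*(deriv ω r)^2 := by
    linarith [hh0'']
  rw [hS, hrm, hj2, hexp]
  field_simp
  ring
end

section
/- The function $\tilde h_2^-(r) = \frac{J^2}{r^3}\left(\frac{1}{M} + \frac{1}{r}\right)$ together with $\tilde k_2^-(r) = -\frac{J^2}{r^4} - \tilde h_2^-(r)$ satisfies the vacuum $l=2$ equation $\tilde h_2' + \tilde k_2' = -\nu' \tilde h_2 + \left(\frac{1}{r} + \frac{\nu'}{2}\right) \cdot \frac{1}{6} r^4 \omega'^2$, where $\omega(r) = 2J/r^3$ and $\nu(r) = \log(1 - 2M/r)$. -/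
open Real

theorem vacuum_l2_equation
    (M J : ℝ) (hM : 0 < M)
    (ν ω h2 k2 : ℝ → ℝ)
    (hν : ∀ r > 2*M, ν r = Real.log (1 - 2*M/r))
    (hω : ∀ r > 2*M, ω r = 2*J/r^3)
    (hh2 : ∀ r > 2*M, h2 r = (J^2/r^3)*(1/M + 1/r))
    (hk2 : ∀ r > 2*M, k2 r = -J^2/r^4 - h2 r) :
    ∀ r > 2*M,
      deriv h2 r + deriv k2 r
        = -(deriv ν r)*(h2 r) + (1/r + (deriv ν r)/2)*((1/6)*r^4*(deriv ω r)^2) := by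
  intro r hr
  have hrpos : 0 < r := lt_trans (by linarith) hr
  have hr0 : r ≠ 0 := ne_of_gt hrpos
  have hM0 : M ≠ 0 := ne_of_gt hM
  have h1pos : 0 < 1 - 2*M/r := by
    have : 2*M/r < 1 := (div_lt_one hrpos).mpr hr
    linarith
  have h1ne : 1 - 2*M/r ≠ 0 := ne_of_gt h1pos
  have hnbhd : ∀ᶠ x in nhds r, 2*M < x := eventually_gt_nhds hr
  -- eventual equalities
  have eh2 : h2 =ᶠ[nhds r] fun x => (J^2/x^3)*(1/M + 1/x) :=
    hnbhd.mono fun x hx => hh2 x hx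
  have ek2 : k2 =ᶠ[nhds r] fun x => -J^2/x^4 - (J^2/x^3)*(1/M + 1/x) :=
    hnbhd.mono fun x hx => by rw [hk2 x hx, hh2 x hx]
  have eν : ν =ᶠ[nhds r] fun x => Real.log (1 - 2*M/x) :=
    hnbhd.mono fun x hx => hν x hx
  have eω : ω =ᶠ[nhds r] fun x => 2*J/x^3 :=
    hnbhd.mono fun x hx => hω x hx
  -- derivatives of model functions
  have hx3 : HasDerivAt (fun x : ℝ => x^3) (3*r^2) r := by
    simpa using hasDerivAt_pow 3 r
  have hx4 : HasDerivAt (fun x : ℝ => x^4) (4*r^3) r := by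
    simpa using hasDerivAt_pow 4 r
  have hr3 : (r:ℝ)^3 ≠ 0 := pow_ne_zero _ hr0
  have hr4 : (r:ℝ)^4 ≠ 0 := pow_ne_zero _ hr0
  have hA : HasDerivAt (fun x : ℝ => J^2/x^3)
      ((0*r^3 - J^2*(3*r^2))/(r^3)^2) r :=
    (hasDerivAt_const r (J^2)).div hx3 hr3
  have hB : HasDerivAt (fun x : ℝ => 1/M + 1/x)
      (0 + (0*r - 1*1)/r^2) r :=
    (hasDerivAt_const r (1/M)).add ((hasDerivAt_const r (1:ℝ)).div (hasDerivAt_id r) hr0)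
  have hH : HasDerivAt (fun x : ℝ => (J^2/x^3)*(1/M + 1/x))
      ((0*r^3 - J^2*(3*r^2))/(r^3)^2 * (1/M + 1/r)
        + (J^2/r^3) * (0 + (0*r - 1*1)/r^2)) r := hA.mul hB
  have hC : HasDerivAt (fun x : ℝ => -J^2/x^4)
      ((0*r^4 - (-J^2)*(4*r^3))/(r^4)^2) r :=
    (hasDerivAt_const r (-J^2)).div hx4 hr4
  have hK : HasDerivAt (fun x : ℝ => -J^2/x^4 - (J^2/x^3)*(1/M + 1/x))
      ((0*r^4 - (-J^2)*(4*r^3))/(r^4)^2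
        - ((0*r^3 - J^2*(3*r^2))/(r^3)^2 * (1/M + 1/r)
            + (J^2/r^3) * (0 + (0*r - 1*1)/r^2))) r := hC.sub hH
  have hinner : HasDerivAt (fun x : ℝ => 1 - 2*M/x)
      (0 - (0*r - (2*M)*1)/r^2) r :=
    (hasDerivAt_const r (1:ℝ)).sub ((hasDerivAt_const r (2*M)).div (hasDerivAt_id r) hr0)
  have hN : HasDerivAt (fun x : ℝ => Real.log (1 - 2*M/x))
      ((0 - (0*r - (2*M)*1)/r^2) / (1 - 2*M/r)) r := hinner.log h1ne
  have hW : HasDerivAt (fun x : ℝ => 2*J/x^3)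
      ((0*r^3 - (2*J)*(3*r^2))/(r^3)^2) r :=
    (hasDerivAt_const r (2*J)).div hx3 hr3
  -- rewrite derivs
  rw [eh2.deriv_eq, ek2.deriv_eq, eν.deriv_eq, eω.deriv_eq,
      hH.deriv, hK.deriv, hN.deriv, hW.deriv, hh2 r hr]
  have hrm : r - 2*M ≠ 0 := by
    have : 2*M < r := hr
    intro h; apply hr0; linarith [h]
  field_simp
  have hrm' : r - M*2 ≠ 0 := by rw [mul_comm]; exact hrm
  field_simp
  ring
end

section
/- The quantities $\tilde h := h - \frac{1}{2} r \nu' k$ and $\tilde m := m - e^{-\lambda/2}(e^{\lambda/2} r k)'$ are invariant under the 'radial' gauge transformation $h \mapsto h + \frac{\nu'}{2} S$, $m \mapsto m + e^{-\lambda/2}(S e^{\lambda/2})'$, $k \mapsto k + S/r$, for any differentiable function $S(r)$. -/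
open Real Set

theorem tilded_quantities_gauge_invariant
    (I : Set ℝ) (hI : IsOpen I) (hIsub : I ⊆ Ioi (0:ℝ))
    (ν lam h m k S : ℝ → ℝ)
    (hSdiff : ∀ r ∈ I, DifferentiableAt ℝ S r)
    (hkdiff : ∀ r ∈ I, DifferentiableAt ℝ k r)
    (hlamdiff : ∀ r ∈ I, DifferentiableAt ℝ lam r) :
    (∀ r ∈ I,
      (h r + (deriv ν r/2)*S r) - (1/2)*r*(deriv ν r)*(k r + S r/r)
        = h r - (1/2)*r*(deriv ν r)*(k r)) ∧
    (∀ r ∈ I,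
      (m r + Real.exp (-(lam r)/2) * deriv (fun s => S s * Real.exp (lam s/2)) r)
        - Real.exp (-(lam r)/2) * deriv (fun s => Real.exp (lam s/2)*s*(k s + S s/s)) r
      = m r - Real.exp (-(lam r)/2) * deriv (fun s => Real.exp (lam s/2)*s*(k s)) r) := by
  constructor
  · intro r hr
    have hr0 : r ≠ 0 := ne_of_gt (hIsub hr)
    field_simp
    ring
  · intro r hr
    have hr0 : r ≠ 0 := ne_of_gt (hIsub hr)
    have hmem : I ∈ nhds r := hI.mem_nhds hr
    have heq : (fun s => Real.exp (lam s/2)*s*(k s + S s/s))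
        =ᶠ[nhds r] (fun s => Real.exp (lam s/2)*s*(k s) + S s * Real.exp (lam s/2)) := by
      filter_upwards [hmem] with s hs
      have hs0 : s ≠ 0 := ne_of_gt (hIsub hs)
      field_simp
    have hd1 : DifferentiableAt ℝ (fun s => Real.exp (lam s/2)*s*(k s)) r := by
      exact (((Real.differentiable_exp.differentiableAt.comp r
        ((hlamdiff r hr).div_const 2)).mul differentiableAt_fun_id).mul (hkdiff r hr))
    have hd2 : DifferentiableAt ℝ (fun s => S s * Real.exp (lam s/2)) r :=
      (hSdiff r hr).mul (Real.differentiable_exp.differentiableAt.comp r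
        ((hlamdiff r hr).div_const 2))
    rw [heq.deriv_eq, deriv_fun_add hd1 hd2]
    ring
end

section
/- Given the matching conditions $[\tilde h_0] = H_0/2$ and $[\tilde h_0'] = \frac{a - M}{a(a - 2M)}[\tilde m_0]$, together with the field equation $\tilde h_0' - r e^{\lambda}\tilde m_0 (8\pi P + 1/r^2) = 4\pi r e^{\lambda}(E+P)\tilde{P}_0 - \frac{1}{12}e^{\lambda} r^3 j^2 \omega'^2$ holding on both sides at $r = a$, with a vacuum exterior ($E_- = P_- = 0$, $\tilde{P}_0^- = 0$, $j_\pm(a) = 1$), $P_+(a) = 0$, $e^{-\lambda(a)} = 1 - 2M/a$, and $[\omega'] = 0$, it follows that $[\tilde m_0] = -4\pi \frac{a^3}{M} E_+(a) \tilde{P}_0^+(a)$. -/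
open Real

theorem m0_jump_formula
    (a M : ℝ) (hM : 0 < M) (ha : 2*M < a)
    (lamA dh0p dh0m m0p m0m P0p Ep Pp dωp dωm jp jm : ℝ)
    (helam : Real.exp (-(lamA)) = 1 - 2*M/a)
    (hPp : Pp = 0) (hjp : jp = 1) (hjm : jm = 1)
    (hfieldp : dh0p - a*Real.exp lamA*m0p*(8*π*Pp + 1/a^2)
      = 4*π*a*Real.exp lamA*(Ep + Pp)*P0p - (1/12)*Real.exp lamA*a^3*jp^2*dωp^2)
    (hfieldm : dh0m - a*Real.exp lamA*m0m*(8*π*0 + 1/a^2)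
      = 4*π*a*Real.exp lamA*(0 + 0)*0 - (1/12)*Real.exp lamA*a^3*jm^2*dωm^2)
    (hω' : dωp = dωm)
    (hjump : dh0p - dh0m = ((a - M)/(a*(a - 2*M)))*(m0p - m0m)) :
    m0p - m0m = -4*π*(a^3/M)*Ep*P0p := by
  have ha0 : 0 < a := by linarith
  have ha2 : a - 2*M ≠ 0 := by linarith
  have hMne : M ≠ 0 := ne_of_gt hM
  have hane : a ≠ 0 := ne_of_gt ha0
  have he : Real.exp lamA * (a - 2*M) = a := by
    have h1 : Real.exp lamA * Real.exp (-(lamA)) = 1 := by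
      rw [← Real.exp_add]; simp
    rw [helam] at h1
    field_simp at h1
    linarith [h1]
  subst hPp hjp hjm hω'
  field_simp at hfieldp hfieldm hjump ⊢
  have hj2 := hjump
  rw [eq_div_iff (by linarith)] at hj2
  have h4 : M * (m0p - m0m) * a ^ 2 = -(a ^ 3 * π * 4 * Ep * P0p) * a ^ 2 := by
    linear_combination (-a^2/12)*((a-2*M)*(hfieldp - hfieldm) - 12*hj2
      + (12*(m0p-m0m) + 48*π*a^2*Ep*P0p)*he)
  exact mul_right_cancel₀ (pow_ne_zero 2 hane) h4
end
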